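/- Along any differentiable solution (x₁, y₁, x₂, y₂, Γ, σ) of the soliton system, the quantities J and F satisfy the differential identities J' = 2J − λσ Σ_{α=1,2} p_α y_α (1 + y_α) and F' = (Γ + 1) F + 2J − λσ Σ_{α=1,2} p_α y_α. -/

import Mathlib

/-- Along any differentiable solution of the soliton system, the
quantities `J = ½ Σ p_α (x_α + (1+y_α)²) − ½Γ²` and `F = Γ + Σ p_α (1+y_α)` satisfy
`J' = 2J − λσ Σ p_α y_α (1+y_α)` and `F' = (Γ+1)F + 2J − λσ Σ p_α y_α`. -/
theorem soliton_system_J_F_evolution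
    (p₁ p₂ : ℤ) (hp₁ : 2 ≤ p₁) (hp₂ : 2 ≤ p₂) (lam : ℝ)
    (I : Set ℝ)
    (x₁ y₁ x₂ y₂ Γ σ : ℝ → ℝ)
    (hx₁ : ∀ τ ∈ I, HasDerivAt x₁ (-2 * x₁ τ * y₁ τ) τ)
    (hy₁ : ∀ τ ∈ I, HasDerivAt y₁ (x₁ τ + (Γ τ + 1 - lam * σ τ) * y₁ τ + Γ τ + 1) τ)
    (hx₂ : ∀ τ ∈ I, HasDerivAt x₂ (-2 * x₂ τ * y₂ τ) τ)
    (hy₂ : ∀ τ ∈ I, HasDerivAt y₂ (x₂ τ + (Γ τ + 1 - lam * σ τ) * y₂ τ + Γ τ + 1) τ)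
    (hΓ : ∀ τ ∈ I, HasDerivAt Γ
      (Γ τ + (p₁ : ℝ) * (1 + y₁ τ) ^ 2 + (p₂ : ℝ) * (1 + y₂ τ) ^ 2) τ)
    (hσ : ∀ τ ∈ I, HasDerivAt σ (2 * σ τ) τ)
    (J F : ℝ → ℝ)
    (hJ : J = fun τ => (1 / 2) * ((p₁ : ℝ) * (x₁ τ + (1 + y₁ τ) ^ 2)
        + (p₂ : ℝ) * (x₂ τ + (1 + y₂ τ) ^ 2)) - (1 / 2) * (Γ τ) ^ 2)
    (hF : F = fun τ => Γ τ + (p₁ : ℝ) * (1 + y₁ τ) + (p₂ : ℝ) * (1 + y₂ τ)) :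
    ∀ τ ∈ I,
      HasDerivAt J (2 * J τ
        - lam * σ τ * ((p₁ : ℝ) * y₁ τ * (1 + y₁ τ) + (p₂ : ℝ) * y₂ τ * (1 + y₂ τ))) τ ∧
      HasDerivAt F ((Γ τ + 1) * F τ + 2 * J τ
        - lam * σ τ * ((p₁ : ℝ) * y₁ τ + (p₂ : ℝ) * y₂ τ)) τ := by
  intro τ hτ
  have dx₁ := hx₁ τ hτ; have dy₁ := hy₁ τ hτ
  have dx₂ := hx₂ τ hτ; have dy₂ := hy₂ τ hτ
  have dΓ := hΓ τ hτ; have dσ := hσ τ hτ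
  subst hJ hF
  constructor
  · have h := (((((dx₁.add (((hasDerivAt_const τ (1:ℝ)).add dy₁).pow 2)).const_mul
        (p₁ : ℝ)).add ((dx₂.add (((hasDerivAt_const τ (1:ℝ)).add dy₂).pow 2)).const_mul
        (p₂ : ℝ))).const_mul ((1:ℝ)/2)).sub ((dΓ.pow 2).const_mul ((1:ℝ)/2)))
    refine h.congr_deriv ?_
    push_cast
    simp only [Pi.add_apply]
    ring
  · have h := ((dΓ.add (((hasDerivAt_const τ (1:ℝ)).add dy₁).const_mul (p₁ : ℝ))).add
        (((hasDerivAt_const τ (1:ℝ)).add dy₂).const_mul (p₂ : ℝ)))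
    refine h.congr_deriv ?_
    push_cast
    ring
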